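/- Let f : ℝ^m → [0,∞) be a probability density and q₀ ∈ (0,1) ∪ (1,∞). If there is an open interval around q₀ on which ∫ f(x)^q dx is finite for every q, then the map q ↦ H_q(f) is continuous at q₀. -/
import Mathlib


open MeasureTheory Topology

lemma rpow_le_add_of_mem (t a b q : ℝ) (ht : 0 ≤ t) (ha : 0 < a) (hq : a ≤ q)
    (hq' : q ≤ b) : t ^ q ≤ t ^ a + t ^ b := by
  rcases eq_or_lt_of_le ht with h | h
  · rw [← h, Real.zero_rpow (by linarith : q ≠ 0)]
    positivity
  · rcases le_total t 1 with ht1 | ht1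
    · calc t ^ q ≤ t ^ a := Real.rpow_le_rpow_of_exponent_ge h ht1 hq
        _ ≤ t ^ a + t ^ b := le_add_of_nonneg_right (Real.rpow_nonneg ht _)
    · calc t ^ q ≤ t ^ b := Real.rpow_le_rpow_of_exponent_le ht1 hq'
        _ ≤ t ^ a + t ^ b := le_add_of_nonneg_left (Real.rpow_nonneg ht _)

/-- **Continuity of the Tsallis entropy in the order `q`.**
If `f` is a probability density on `ℝ^m`, `q₀ ∈ (0,1) ∪ (1,∞)`, and `∫ f^q < ∞` for
every `q` in an open interval around `q₀`, then `q ↦ H_q(f) = (1/(1-q))(∫ f^q - 1)`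
is continuous at `q₀`. -/
theorem tsallis_continuousAt (m : ℕ)
    (f : (Fin m → ℝ) → ℝ)
    (hf0 : ∀ x, 0 ≤ f x) (hfmeas : Measurable f) (hf1 : ∫ x, f x = 1)
    (q₀ : ℝ) (hq₀pos : 0 < q₀) (hq₀ : q₀ ≠ 1)
    (hnbhd : ∃ ε > (0 : ℝ), ∀ q : ℝ, |q - q₀| < ε → Integrable (fun x => f x ^ q)) :
    ContinuousAt (fun q : ℝ => (1 / (1 - q)) * ((∫ x, f x ^ q) - 1)) q₀ := by
  obtain ⟨ε, hε, hint⟩ := hnbhd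
  set δ : ℝ := min (ε / 2) (q₀ / 2) with hδdef
  have hδpos : 0 < δ := lt_min (by linarith) (by linarith)
  have hδε : δ < ε := lt_of_le_of_lt (min_le_left _ _) (by linarith)
  have hδq : δ ≤ q₀ / 2 := min_le_right _ _
  have ha : Integrable (fun x => f x ^ (q₀ - δ)) := hint _ (by rw [abs_of_nonpos] <;> linarith)
  have hb : Integrable (fun x => f x ^ (q₀ + δ)) := hint _ (by rw [abs_of_nonneg] <;> linarith)
  have hcont : ContinuousAt (fun q : ℝ => ∫ x, f x ^ q) q₀ := by
    apply continuousAt_of_dominated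
      (bound := fun x => f x ^ (q₀ - δ) + f x ^ (q₀ + δ))
    · filter_upwards with q
      exact ((by measurability : Measurable (fun x => f x ^ q))).aestronglyMeasurable
    · have hmem : Metric.ball q₀ δ ∈ 𝓝 q₀ := Metric.ball_mem_nhds _ hδpos
      filter_upwards [hmem] with q hq
      filter_upwards with x
      rw [Metric.mem_ball, Real.dist_eq, abs_lt] at hq
      rw [Real.norm_eq_abs, abs_of_nonneg (Real.rpow_nonneg (hf0 x) _)]
      exact rpow_le_add_of_mem _ _ _ _ (hf0 x) (by linarith) (by linarith [hq.1]) (by linarith [hq.2])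
    · exact ha.add hb
    · filter_upwards with x
      rcases eq_or_lt_of_le (hf0 x) with h | h
      · apply ContinuousAt.congr (continuousAt_const (y := (0:ℝ)))
        filter_upwards [Metric.ball_mem_nhds q₀ hq₀pos] with q hq
        rw [Metric.mem_ball, Real.dist_eq, abs_lt] at hq
        rw [← h, Real.zero_rpow (by linarith [hq.1] : q ≠ 0)]
      · exact (Real.continuousAt_const_rpow (ne_of_gt h)).comp continuousAt_id
  have h1 : ContinuousAt (fun q : ℝ => 1 / (1 - q)) q₀ := by
    apply ContinuousAt.div continuousAt_const
      ((continuous_const.sub continuous_id).continuousAt)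
    exact sub_ne_zero.mpr (Ne.symm hq₀)
  exact h1.mul (hcont.sub continuousAt_const)
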